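/- Suppose the flat interpolation estimate holds on each element E: for w ∈ H²(E), the virtual interpolant w_I ∈ V_h¹(E) satisfies ‖w − w_I‖_{L²(E)} + h|w − w_I|_{H¹(E)} ≤ C h_E²|w|_{H²(E)}, and suppose the norm/seminorm equivalences of Lemma 5.4 hold between each E and its lifted curved element Ẽ. Then for every v ∈ H²(Γ), the lifted interpolant v_I^ℓ satisfies ‖v − v_I^ℓ‖_{L²(Γ)} + h|v − v_I^ℓ|_{H¹(Γ)} ≤ C h²(|v|_{H²(Γ)} + h|v|_{H¹(Γ)}). -/

import Mathlib

open Finset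

/-- Interpolation part (5.8) of Theorem 5.6, in an abstract element-wise setting.
`Γ` is the surface, `Γh` the polygonal approximation with one-to-one normal
projection `a : Γh ≃ Γ`; mesh elements `ι` have diameters `hE e ≤ h`; `Ih` is the
virtual interpolation operator on `Γh` (applied to the unlift `v^{-ℓ} = v ∘ a`).
Assuming the flat interpolation estimate
`‖w − I_h w‖_{L²(E)} + h|w − I_h w|_{H¹(E)} ≤ C hE² |w|_{H²(E)}` on each element,
the L² and H¹ norm equivalences under lifting with constant `C`, and the unlift
H² bound `H2h(v^{-ℓ}) ≤ C(H2c v + hE·H1c v)` of Lemma 5.4, for every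
`v ∈ H²(Γ)` the lifted interpolant `v_I^ℓ` satisfies
`‖v − v_I^ℓ‖_{L²(Γ)} + h|v − v_I^ℓ|_{H¹(Γ)} ≤ C' h² (|v|_{H²(Γ)} + h|v|_{H¹(Γ)})`. -/

private lemma sqrt_add_le' {A B : ℝ} (hA : 0 ≤ A) (hB : 0 ≤ B) :
    Real.sqrt (A + B) ≤ Real.sqrt A + Real.sqrt B := by
  calc Real.sqrt (A + B) ≤ Real.sqrt ((Real.sqrt A + Real.sqrt B) ^ 2) :=
        Real.sqrt_le_sqrt (by
          nlinarith [Real.sq_sqrt hA, Real.sq_sqrt hB,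
            mul_nonneg (Real.sqrt_nonneg A) (Real.sqrt_nonneg B)])
    _ = _ := Real.sqrt_sq (by positivity)

theorem lifted_interpolation_estimate
    (C Ci : ℝ) (hC : 0 < C) (hCi : 0 < Ci) :
    ∃ C' > (0:ℝ), ∀ h : ℝ, 0 < h →
      ∀ (Γ Γh : Type) (a : Γh ≃ Γ) (ι : Type) [Fintype ι],
      ∀ (hE : ι → ℝ)
        (L2h H1h H2h : ι → (Γh → ℝ) → ℝ)
        (L2c H1c H2c : ι → (Γ → ℝ) → ℝ)
        (Ih : (Γh → ℝ) → (Γh → ℝ)),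
      (∀ e, 0 < hE e ∧ hE e ≤ h) →
      -- seminorms are nonnegative
      (∀ e (w : Γh → ℝ), 0 ≤ L2h e w ∧ 0 ≤ H1h e w ∧ 0 ≤ H2h e w) →
      (∀ e (v : Γ → ℝ), 0 ≤ L2c e v ∧ 0 ≤ H1c e v ∧ 0 ≤ H2c e v) →
      -- flat interpolation estimate on each element
      (∀ e (w : Γh → ℝ),
        L2h e (w - Ih w) + h * H1h e (w - Ih w) ≤ Ci * hE e ^ 2 * H2h e w) →
      -- L² norm equivalence under lifting
      (∀ e (w : Γh → ℝ),
        (1 / C) * L2h e w ≤ L2c e (fun y => w (a.symm y)) ∧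
        L2c e (fun y => w (a.symm y)) ≤ C * L2h e w) →
      -- H¹ seminorm equivalence under lifting
      (∀ e (w : Γh → ℝ),
        (1 / C) * H1h e w ≤ H1c e (fun y => w (a.symm y)) ∧
        H1c e (fun y => w (a.symm y)) ≤ C * H1h e w) →
      -- unlift H² bound (estimate (5.7) of Lemma 5.4)
      (∀ e (v : Γ → ℝ),
        H2h e (fun x => v (a x)) ≤ C * (H2c e v + hE e * H1c e v)) →
      ∀ v : Γ → ℝ,
        Real.sqrt (∑ e,
              (L2c e (fun y => v y - Ih (fun x => v (a x)) (a.symm y))) ^ 2) +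
            h * Real.sqrt (∑ e,
              (H1c e (fun y => v y - Ih (fun x => v (a x)) (a.symm y))) ^ 2) ≤
          C' * h ^ 2 *
            (Real.sqrt (∑ e, (H2c e v) ^ 2) +
              h * Real.sqrt (∑ e, (H1c e v) ^ 2)) := by
  refine ⟨3 * C ^ 2 * Ci, by positivity, ?_⟩
  intro h hh Γ Γh a ι _ hE L2h H1h H2h L2c H1c H2c Ih hhE hnnh hnnc hflat hL2 hH1 hH2 v
  set w : Γh → ℝ := fun x => v (a x) with hw
  set D : Γh → ℝ := w - Ih w with hD
  have hfun : (fun y => v y - Ih w (a.symm y)) = fun y => D (a.symm y) := by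
    funext y
    simp [hD, hw, Pi.sub_apply]
  rw [hfun]
  set K := C ^ 2 * Ci * h ^ 2 with hK
  have hKpos : 0 < K := by positivity
  have key : ∀ e, L2c e (fun y => D (a.symm y)) ≤ K * (H2c e v + h * H1c e v) ∧
      h * H1c e (fun y => D (a.symm y)) ≤ K * (H2c e v + h * H1c e v) := by
    intro e
    obtain ⟨he1, he2⟩ := hhE e
    have hD2 := (hL2 e D).2
    have hH12 := (hH1 e D).2
    have hfl := hflat e w
    have hH2b := hH2 e v
    have hnn1 := (hnnh e D).1
    have hnn2 := (hnnh e D).2.1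
    have hnn3 := (hnnh e w).2.2
    have hc1 := (hnnc e v).2.1
    have hc2 := (hnnc e v).2.2
    have hEsq : hE e ^ 2 ≤ h ^ 2 := pow_le_pow_left₀ he1.le he2 2
    have hH2w : H2h e w ≤ C * (H2c e v + h * H1c e v) := by
      refine hH2b.trans (mul_le_mul_of_nonneg_left ?_ hC.le)
      exact add_le_add_right (mul_le_mul_of_nonneg_right he2 hc1) _
    have s1 : L2h e D ≤ Ci * hE e ^ 2 * H2h e w :=
      le_trans (le_add_of_nonneg_right (mul_nonneg hh.le hnn2)) (by simpa [hD] using hfl)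
    have s1' : h * H1h e D ≤ Ci * hE e ^ 2 * H2h e w :=
      le_trans (le_add_of_nonneg_left hnn1) (by simpa [hD] using hfl)
    have s2 : Ci * hE e ^ 2 * H2h e w ≤ Ci * h ^ 2 * (C * (H2c e v + h * H1c e v)) := by
      apply mul_le_mul
      · exact mul_le_mul_of_nonneg_left hEsq hCi.le
      · exact hH2w
      · exact hnn3
      · positivity
    constructor
    · calc L2c e (fun y => D (a.symm y)) ≤ C * L2h e D := hD2
        _ ≤ C * (Ci * h ^ 2 * (C * (H2c e v + h * H1c e v))) :=
          mul_le_mul_of_nonneg_left (s1.trans s2) hC.le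
        _ = K * (H2c e v + h * H1c e v) := by rw [hK]; ring
    · calc h * H1c e (fun y => D (a.symm y)) ≤ h * (C * H1h e D) :=
          mul_le_mul_of_nonneg_left hH12 hh.le
        _ = C * (h * H1h e D) := by ring
        _ ≤ C * (Ci * h ^ 2 * (C * (H2c e v + h * H1c e v))) :=
          mul_le_mul_of_nonneg_left (s1'.trans s2) hC.le
        _ = K * (H2c e v + h * H1c e v) := by rw [hK]; ring
  -- abbreviations
  set A := ∑ e, (H2c e v) ^ 2 with hA
  set B := ∑ e, (H1c e v) ^ 2 with hB
  have hAnn : 0 ≤ A := Finset.sum_nonneg fun e _ => sq_nonneg _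
  have hBnn : 0 ≤ B := Finset.sum_nonneg fun e _ => sq_nonneg _
  -- bound on the common majorant sum
  have majsum : ∑ e, (K * (H2c e v + h * H1c e v)) ^ 2 ≤ 2 * K ^ 2 * (A + h ^ 2 * B) := by
    have : ∀ e : ι, (K * (H2c e v + h * H1c e v)) ^ 2 ≤
        2 * K ^ 2 * ((H2c e v) ^ 2 + h ^ 2 * (H1c e v) ^ 2) := by
      intro e
      nlinarith [sq_nonneg (H2c e v - h * H1c e v), sq_nonneg K, sq_nonneg (H2c e v + h * H1c e v)]
    calc ∑ e, (K * (H2c e v + h * H1c e v)) ^ 2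
        ≤ ∑ e, 2 * K ^ 2 * ((H2c e v) ^ 2 + h ^ 2 * (H1c e v) ^ 2) :=
          Finset.sum_le_sum fun e _ => this e
      _ = 2 * K ^ 2 * (A + h ^ 2 * B) := by
          rw [← Finset.mul_sum, Finset.sum_add_distrib, ← Finset.mul_sum, hA, hB]
  have majsqrt : Real.sqrt (∑ e, (K * (H2c e v + h * H1c e v)) ^ 2) ≤
      (3 / 2) * K * (Real.sqrt A + h * Real.sqrt B) := by
    have step1 : Real.sqrt (∑ e, (K * (H2c e v + h * H1c e v)) ^ 2) ≤
        Real.sqrt (2 * K ^ 2 * (A + h ^ 2 * B)) := Real.sqrt_le_sqrt majsum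
    have step2 : Real.sqrt (2 * K ^ 2 * (A + h ^ 2 * B)) =
        Real.sqrt 2 * K * Real.sqrt (A + h ^ 2 * B) := by
      rw [Real.sqrt_mul (by positivity), Real.sqrt_mul (by norm_num : (0:ℝ) ≤ 2),
        Real.sqrt_sq hKpos.le]
    have step3 : Real.sqrt (A + h ^ 2 * B) ≤ Real.sqrt A + h * Real.sqrt B := by
      refine (sqrt_add_le' hAnn (by positivity)).trans ?_
      rw [Real.sqrt_mul (by positivity), Real.sqrt_sq hh.le]
    have hsqrt2 : Real.sqrt 2 ≤ 3 / 2 := by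
      rw [show (3 / 2 : ℝ) = Real.sqrt ((3 / 2) ^ 2) from (Real.sqrt_sq (by norm_num)).symm]
      exact Real.sqrt_le_sqrt (by norm_num)
    calc Real.sqrt (∑ e, (K * (H2c e v + h * H1c e v)) ^ 2)
        ≤ Real.sqrt 2 * K * Real.sqrt (A + h ^ 2 * B) := by rw [← step2]; exact step1
      _ ≤ Real.sqrt 2 * K * (Real.sqrt A + h * Real.sqrt B) :=
          mul_le_mul_of_nonneg_left step3 (by positivity)
      _ ≤ (3 / 2) * K * (Real.sqrt A + h * Real.sqrt B) := by
          have hsnn : 0 ≤ Real.sqrt A + h * Real.sqrt B := by positivity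
          exact mul_le_mul_of_nonneg_right
            (mul_le_mul_of_nonneg_right hsqrt2 hKpos.le) hsnn
  -- first term
  have term1 : Real.sqrt (∑ e, (L2c e fun y => D (a.symm y)) ^ 2) ≤
      Real.sqrt (∑ e, (K * (H2c e v + h * H1c e v)) ^ 2) := by
    apply Real.sqrt_le_sqrt
    refine Finset.sum_le_sum fun e _ => ?_
    exact pow_le_pow_left₀ (hnnc e _).1 (key e).1 2
  -- second term
  have term2 : h * Real.sqrt (∑ e, (H1c e fun y => D (a.symm y)) ^ 2) ≤
      Real.sqrt (∑ e, (K * (H2c e v + h * H1c e v)) ^ 2) := by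
    have heq : h * Real.sqrt (∑ e, (H1c e fun y => D (a.symm y)) ^ 2) =
        Real.sqrt (∑ e, (h * H1c e fun y => D (a.symm y)) ^ 2) := by
      rw [show (∑ e, (h * H1c e fun y => D (a.symm y)) ^ 2) =
          h ^ 2 * ∑ e, (H1c e fun y => D (a.symm y)) ^ 2 by
        rw [Finset.mul_sum]; exact Finset.sum_congr rfl fun e _ => by ring]
      rw [Real.sqrt_mul (by positivity), Real.sqrt_sq hh.le]
    rw [heq]
    apply Real.sqrt_le_sqrt
    refine Finset.sum_le_sum fun e _ => ?_
    refine pow_le_pow_left₀ ?_ (key e).2 2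
    exact mul_nonneg hh.le (hnnc e _).2.1
  calc Real.sqrt (∑ e, (L2c e fun y => D (a.symm y)) ^ 2) +
        h * Real.sqrt (∑ e, (H1c e fun y => D (a.symm y)) ^ 2)
      ≤ 2 * Real.sqrt (∑ e, (K * (H2c e v + h * H1c e v)) ^ 2) := by
        linarith [term1, term2]
    _ ≤ 2 * ((3 / 2) * K * (Real.sqrt A + h * Real.sqrt B)) :=
        mul_le_mul_of_nonneg_left majsqrt (by norm_num)
    _ = 3 * C ^ 2 * Ci * h ^ 2 * (Real.sqrt A + h * Real.sqrt B) := by rw [hK]; ring
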